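/- An assignment χ violates some transitivity constraint if and only if some chord-free simple cycle in G(E,χ) contains exactly one 0-edge. -/

import Mathlib

/-- The list of edges of the cycle determined by vertex list `l = [i₁,…,i_k]`:
successive pairs plus the closing edge `(i_k, i₁)`. -/
def cycEdges (l : List ℕ) : List (ℕ × ℕ) := l.zip (l.rotate 1)

/-- `l` is (the vertex list of) a cycle in the graph `G(E)`. -/
def IsCycle (E : ℕ → ℕ → Prop) (l : List ℕ) : Prop :=
  3 ≤ l.length ∧ ∀ p ∈ cycEdges l, E p.1 p.2

/-- The number of 0-edges of the cycle `l` under the labeling `χ`. -/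
def numZeroEdges (χ : ℕ → ℕ → Bool) (l : List ℕ) : ℕ :=
  ((cycEdges l).filter (fun p => !χ p.1 p.2)).length

/-- The assignment `χ` violates some transitivity constraint
`e_{[i₁,i₂]} ∧ ⋯ ∧ e_{[i_{k-1},i_k]} ⇒ e_{[i₁,i_k]}` over `E`. -/
def ViolatesTrans (E : ℕ → ℕ → Prop) (χ : ℕ → ℕ → Bool) : Prop :=
  ∃ l : List ℕ, 3 ≤ l.length ∧ l.Chain' E ∧
    (∀ p ∈ l.zip l.tail, χ p.1 p.2 = true) ∧
    E (l.headD 0) (l.getLastD 0) ∧ χ (l.headD 0) (l.getLastD 0) = false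

/-- The simple cycle (or acyclic path) `l` has a chord: an edge of `G(E)` joining two
vertices at positions `p < q` that are not adjacent in the cycle. -/
def HasChord (E : ℕ → ℕ → Prop) (l : List ℕ) : Prop :=
  ∃ p q : ℕ, p < q ∧ q < l.length ∧ p + 1 < q ∧ ¬(p = 0 ∧ q = l.length - 1) ∧
    E (l.getD p 0) (l.getD q 0)

namespace Stmt2Aux

open List

/-- index-form witness of a transitivity violation -/
def Wit (E : ℕ → ℕ → Prop) (χ : ℕ → ℕ → Bool) (l : List ℕ) : Prop :=
  3 ≤ l.length ∧
  (∀ i, i + 1 < l.length → E (l.getD i 0) (l.getD (i+1) 0)) ∧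
  (∀ i, i + 1 < l.length → χ (l.getD i 0) (l.getD (i+1) 0) = true) ∧
  E (l.getD 0 0) (l.getD (l.length - 1) 0) ∧
  χ (l.getD 0 0) (l.getD (l.length - 1) 0) = false

lemma getD_lt {l : List ℕ} {i : ℕ} (h : i < l.length) : l.getD i 0 = l[i] :=
  l.getD_eq_getElem 0 h

lemma mod_add_one (a n : ℕ) : (a % n + 1) % n = (a + 1) % n := by
  conv_lhs => rw [Nat.add_mod]
  conv_rhs => rw [Nat.add_mod]
  rw [Nat.mod_mod_of_dvd _ dvd_rfl]

lemma mod_ne (n i j : ℕ) (hj : j < n) (hi : 0 < i) (hin : i < n) : (i + j) % n ≠ j := by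
  intro h
  rcases Nat.lt_or_ge (i + j) n with h1 | h1
  · rw [Nat.mod_eq_of_lt h1] at h; omega
  · have h2 : i + j - n < n := by omega
    rw [Nat.mod_eq_sub_mod h1, Nat.mod_eq_of_lt h2] at h; omega

lemma length_cycEdges (l : List ℕ) : (cycEdges l).length = l.length := by
  simp [cycEdges]

lemma cycEdges_getElem (l : List ℕ) (j : ℕ) (hj : j < (cycEdges l).length) :
    (cycEdges l)[j] = (l.getD j 0, l.getD ((j+1) % l.length) 0) := by
  have hn : j < l.length := by rwa [length_cycEdges] at hj
  have h0 : 0 < l.length := by omega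
  have h2 : (j+1) % l.length < l.length := Nat.mod_lt _ h0
  simp only [cycEdges, List.getElem_zip]
  have hrot : (l.rotate 1)[j]'(by simpa using hn) = l[(j+1) % l.length]'h2 := by
    have := List.get_rotate l 1 ⟨j, by simpa using hn⟩
    simpa using this
  rw [hrot, getD_lt hn, getD_lt h2]

lemma getD_rotate (l : List ℕ) (k i : ℕ) (h : i < l.length) :
    (l.rotate k).getD i 0 = l.getD ((i + k) % l.length) 0 := by
  have h0 : 0 < l.length := by omega
  have h2 : (i + k) % l.length < l.length := Nat.mod_lt _ h0
  rw [getD_lt (show i < (l.rotate k).length by simpa using h), getD_lt h2]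
  have := List.get_rotate l k ⟨i, by simpa using h⟩
  simpa using this

lemma headD_eq (l : List ℕ) : l.headD 0 = l.getD 0 0 := by
  cases l <;> simp

lemma getLastD_eq (l : List ℕ) : l.getLastD 0 = l.getD (l.length - 1) 0 := by
  rw [List.getLastD_eq_getLast?, List.getLast?_eq_getElem?, List.getD_eq_getElem?_getD]

lemma chain'_iff (R : ℕ → ℕ → Prop) (l : List ℕ) :
    l.Chain' R ↔ ∀ i, i + 1 < l.length → R (l.getD i 0) (l.getD (i+1) 0) := by
  unfold List.Chain'
  rw [List.isChain_iff_getElem]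
  constructor
  · intro h i hi
    have := h i (by omega)
    rwa [← getD_lt (by omega : i < l.length),
      ← getD_lt hi] at this
  · intro h i hi
    have hi' : i + 1 < l.length := by omega
    have := h i hi'
    rw [getD_lt (by omega : i < l.length), getD_lt hi'] at this
    simpa using this

lemma zip_forall (χ : ℕ → ℕ → Bool) (l : List ℕ) :
    (∀ p ∈ l.zip l.tail, χ p.1 p.2 = true) ↔
      ∀ i, i + 1 < l.length → χ (l.getD i 0) (l.getD (i+1) 0) = true := by
  have hlen : (l.zip l.tail).length = l.length - 1 := by
    simp [List.length_zip]
  constructor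
  · intro h i hi
    have him : i < (l.zip l.tail).length := by omega
    have heq : (l.zip l.tail)[i] = (l.getD i 0, l.getD (i+1) 0) := by
      rw [List.getElem_zip, List.getElem_tail, getD_lt (by omega : i < l.length), getD_lt hi]
    have := h _ (List.getElem_mem him)
    rwa [heq] at this
  · intro h p hp
    obtain ⟨i, hi, heq⟩ := List.mem_iff_getElem.mp hp
    have hi' : i + 1 < l.length := by omega
    have heq2 : (l.zip l.tail)[i] = (l.getD i 0, l.getD (i+1) 0) := by
      rw [List.getElem_zip, List.getElem_tail, getD_lt (by omega : i < l.length), getD_lt hi']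
    rw [← heq, heq2]
    exact h i hi'

lemma violates_iff (E : ℕ → ℕ → Prop) (χ : ℕ → ℕ → Bool) :
    ViolatesTrans E χ ↔ ∃ l, Wit E χ l := by
  unfold ViolatesTrans Wit
  apply exists_congr
  intro l
  rw [chain'_iff, zip_forall, headD_eq, getLastD_eq]

lemma isCycle_iff (E : ℕ → ℕ → Prop) (l : List ℕ) :
    IsCycle E l ↔ 3 ≤ l.length ∧
      ∀ j, j < l.length → E (l.getD j 0) (l.getD ((j+1) % l.length) 0) := by
  unfold IsCycle
  apply and_congr_right
  intro _
  constructor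
  · intro h j hj
    have hj' : j < (cycEdges l).length := by rwa [length_cycEdges]
    have := h _ (List.getElem_mem hj')
    rwa [cycEdges_getElem l j hj'] at this
  · intro h p hp
    obtain ⟨j, hj, heq⟩ := List.mem_iff_getElem.mp hp
    rw [← heq, cycEdges_getElem l j hj]
    exact h j (by rwa [length_cycEdges] at hj)

lemma filter_length_eq_one {α : Type*} {p : α → Bool} {L : List α} :
    (L.filter p).length = 1 ↔
      ∃ i, ∃ h : i < L.length, p L[i] = true ∧
        ∀ j (hj : j < L.length), p L[j] = true → j = i := by
  induction L with
  | nil => simp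
  | cons a L ih =>
    rw [List.filter_cons]
    by_cases hpa : p a = true
    · rw [if_pos hpa]
      simp only [List.length_cons]
      constructor
      · intro h
        have hnil : L.filter p = [] := by
          have : (L.filter p).length = 0 := by omega
          exact List.length_eq_zero_iff.mp this
        have hall : ∀ x ∈ L, ¬ p x = true := List.filter_eq_nil_iff.mp hnil
        refine ⟨0, by omega, by simpa using hpa, ?_⟩
        intro j hj hpj
        rcases j with _ | j'
        · rfl
        · exact absurd hpj (hall _ (List.getElem_mem (by simpa using hj)))
      · rintro ⟨i, hi, hpi, huniq⟩
        have hi0 : i = 0 := (huniq 0 (by omega) (by simpa using hpa)).symm ▸ rfl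
        have hnil : L.filter p = [] := by
          rw [List.filter_eq_nil_iff]
          intro x hx hpx
          obtain ⟨j', hj', heq⟩ := List.mem_iff_getElem.mp hx
          have := huniq (j'+1) (by omega) (by simpa [heq] using hpx)
          omega
        simp [hnil]
    · rw [if_neg hpa, ih]
      constructor
      · rintro ⟨i, hi, hpi, huniq⟩
        refine ⟨i+1, by simp; omega, by simpa using hpi, ?_⟩
        intro j hj hpj
        rcases j with _ | j'
        · exact absurd (by simpa using hpj) hpa
        · have := huniq j' (by simp at hj; omega) (by simpa using hpj)
          omega
      · rintro ⟨i, hi, hpi, huniq⟩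
        rcases i with _ | i'
        · exact absurd (by simpa using hpi) hpa
        · refine ⟨i', by simp at hi; omega, by simpa using hpi, ?_⟩
          intro j hj hpj
          have := huniq (j+1) (by simp; omega) (by simpa using hpj)
          omega

lemma numZero_iff (χ : ℕ → ℕ → Bool) (l : List ℕ) :
    numZeroEdges χ l = 1 ↔
      ∃ j, ∃ h : j < l.length,
        χ (l.getD j 0) (l.getD ((j+1) % l.length) 0) = false ∧
        ∀ k, k < l.length → χ (l.getD k 0) (l.getD ((k+1) % l.length) 0) = false → k = j := by
  unfold numZeroEdges
  rw [filter_length_eq_one]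
  constructor
  · rintro ⟨j, hj, hpj, huniq⟩
    have hj' : j < l.length := by rwa [length_cycEdges] at hj
    rw [cycEdges_getElem l j hj] at hpj
    refine ⟨j, hj', by simpa using hpj, ?_⟩
    intro k hk hkz
    have hk' : k < (cycEdges l).length := by rwa [length_cycEdges]
    apply huniq k hk'
    rw [cycEdges_getElem l k hk']
    simpa using hkz
  · rintro ⟨j, hj, hpj, huniq⟩
    have hj' : j < (cycEdges l).length := by rwa [length_cycEdges]
    refine ⟨j, hj', by rw [cycEdges_getElem l j hj']; simpa using hpj, ?_⟩
    intro k hk hkz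
    have hk' : k < l.length := by rwa [length_cycEdges] at hk
    rw [cycEdges_getElem l k hk] at hkz
    exact huniq k hk' (by simpa using hkz)

section Main

variable {E : ℕ → ℕ → Prop} {χ : ℕ → ℕ → Bool}
variable (hEsym : Symmetric E) (hχsym : ∀ i j, χ i j = χ j i)

include hEsym hχsym in
/-- A witness `l` is itself a cycle with exactly one 0-edge. -/
lemma wit_cycle {l : List ℕ} (hw : Wit E χ l) :
    IsCycle E l ∧ numZeroEdges χ l = 1 := by
  obtain ⟨h3, hE, hχ, hEc, hχc⟩ := hw
  have h0 : 0 < l.length := by omega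
  constructor
  · rw [isCycle_iff]
    refine ⟨h3, ?_⟩
    intro j hj
    rcases Nat.lt_or_ge (j+1) l.length with hj1 | hj1
    · rw [Nat.mod_eq_of_lt hj1]; exact hE j hj1
    · have hje : j = l.length - 1 := by omega
      have : (j+1) % l.length = 0 := by
        have : j + 1 = l.length := by omega
        simp [this]
      rw [this, hje]
      exact hEsym hEc
  · rw [numZero_iff]
    have hmod : (l.length - 1 + 1) % l.length = 0 := by
      have : l.length - 1 + 1 = l.length := by omega
      simp [this]
    refine ⟨l.length - 1, by omega, ?_, ?_⟩
    · rw [hmod, hχsym]; exact hχc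
    · intro k hk hkz
      rcases Nat.lt_or_ge (k+1) l.length with hk1 | hk1
      · rw [Nat.mod_eq_of_lt hk1] at hkz
        rw [hχ k hk1] at hkz
        simp at hkz
      · omega

include hEsym hχsym in
/-- From a cycle with exactly one 0-edge we get a witness (rotate the 0-edge last). -/
lemma cycle_wit {l : List ℕ} (hc : IsCycle E l) (hz : numZeroEdges χ l = 1) :
    ∃ l', Wit E χ l' := by
  rw [isCycle_iff] at hc
  obtain ⟨h3, hE⟩ := hc
  rw [numZero_iff] at hz
  obtain ⟨j, hj, hzj, huniq⟩ := hz
  set n := l.length with hn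
  have h0 : 0 < n := by omega
  rcases Nat.lt_or_ge j (n - 1) with hjlt | hjge
  · -- rotate by j+1
    refine ⟨l.rotate (j+1), ?_, ?_, ?_, ?_, ?_⟩
    · simpa using h3
    · intro i hi
      have hi' : i + 1 < n := by simpa using hi
      rw [getD_rotate l (j+1) i (by omega), getD_rotate l (j+1) (i+1) (by omega)]
      have hm : (i + (j+1)) % n < n := Nat.mod_lt _ h0
      have h2 : (i + 1 + (j + 1)) % n = ((i + (j+1)) % n + 1) % n := by
        rw [mod_add_one]
        ring_nf
      rw [h2]
      exact hE _ hm
    · intro i hi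
      have hi' : i + 1 < n := by simpa using hi
      rw [getD_rotate l (j+1) i (by omega), getD_rotate l (j+1) (i+1) (by omega)]
      have hm : (i + (j+1)) % n < n := Nat.mod_lt _ h0
      have h2 : (i + 1 + (j + 1)) % n = ((i + (j+1)) % n + 1) % n := by
        rw [mod_add_one]
        ring_nf
      rw [h2]
      by_contra hfalse
      have hne : (i + (j+1)) % n ≠ j := by
        have : i + (j + 1) = (i+1) + j := by ring
        rw [this]
        exact mod_ne n (i+1) j (by omega) (by omega) (by omega)
      exact hne (huniq _ hm (by simpa using hfalse))
    · have hlen : (l.rotate (j+1)).length = n := by simp [hn]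
      rw [hlen, getD_rotate l (j+1) 0 (by omega), getD_rotate l (j+1) (n-1) (by omega)]
      have e1 : (0 + (j+1)) % n = j + 1 := by rw [Nat.mod_eq_of_lt (by omega)]; omega
      have e2 : (n - 1 + (j+1)) % n = j := by
        have : n - 1 + (j + 1) = n + j := by omega
        rw [this, Nat.add_mod_left, Nat.mod_eq_of_lt (by omega)]
      rw [e1, e2]
      have := hE j (by omega)
      rw [Nat.mod_eq_of_lt (by omega : j + 1 < n)] at this
      exact hEsym this
    · have hlen : (l.rotate (j+1)).length = n := by simp [hn]
      rw [hlen, getD_rotate l (j+1) 0 (by omega), getD_rotate l (j+1) (n-1) (by omega)]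
      have e1 : (0 + (j+1)) % n = j + 1 := by rw [Nat.mod_eq_of_lt (by omega)]; omega
      have e2 : (n - 1 + (j+1)) % n = j := by
        have : n - 1 + (j + 1) = n + j := by omega
        rw [this, Nat.add_mod_left, Nat.mod_eq_of_lt (by omega)]
      rw [e1, e2, hχsym]
      rw [Nat.mod_eq_of_lt (by omega : j + 1 < n)] at hzj
      exact hzj
  · -- j = n - 1 : l is already a witness
    have hje : j = n - 1 := by omega
    subst hje
    have hmod : (n - 1 + 1) % n = 0 := by
      have : n - 1 + 1 = n := by omega
      simp [this]
    refine ⟨l, h3, ?_, ?_, ?_, ?_⟩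
    · intro i hi
      have := hE i (by omega)
      rwa [Nat.mod_eq_of_lt (by omega : i + 1 < n)] at this
    · intro i hi
      by_contra hfalse
      have := huniq i (by omega) (by rw [Nat.mod_eq_of_lt (by omega : i + 1 < n)]; simpa using hfalse)
      omega
    · have := hE (n-1) (by omega)
      rw [hmod] at this
      exact hEsym this
    · rw [hχsym]
      rwa [hmod] at hzj

-- getD computations on shortened lists

lemma getD_tad_lo {l : List ℕ} {a b j : ℕ} (hj : j < a) (ha : a ≤ l.length) :
    (l.take a ++ l.drop b).getD j 0 = l.getD j 0 := by
  have hlt : j < (l.take a).length := by simp; omega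
  rw [getD_lt (show j < (l.take a ++ l.drop b).length by simp; omega),
    List.getElem_append_left hlt, List.getElem_take, getD_lt (by omega)]

lemma getD_tad_hi {l : List ℕ} {a b j : ℕ} (hj : a ≤ j) (ha : a ≤ l.length)
    (hb : b ≤ l.length) (hjl : j - a + b < l.length) :
    (l.take a ++ l.drop b).getD j 0 = l.getD (j - a + b) 0 := by
  have hta : (l.take a).length = a := by simp; omega
  have hlen : j < (l.take a ++ l.drop b).length := by simp; omega
  rw [getD_lt hlen, List.getElem_append_right (by omega)]
  rw [getD_lt hjl]
  have : (l.drop b)[j - (l.take a).length]'(by simp; omega) = l[b + (j - (l.take a).length)]'(by simp; omega) :=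
    List.getElem_drop
  rw [this]
  congr 1
  omega

lemma getD_dt {l : List ℕ} {p t j : ℕ} (hj : j < t) (hjl : p + j < l.length) :
    ((l.drop p).take t).getD j 0 = l.getD (p + j) 0 := by
  have h1 : j < ((l.drop p).take t).length := by simp; omega
  rw [getD_lt h1, List.getElem_take, List.getElem_drop, getD_lt hjl]

variable (hne : ∀ i j, E i j → i ≠ j)

include hEsym hχsym hne in
lemma shorten : ∀ n : ℕ, ∀ l : List ℕ, l.length ≤ n → Wit E χ l →
    ∃ l', Wit E χ l' ∧ l'.Nodup ∧ ¬ HasChord E l' := by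
  intro n
  induction n with
  | zero => intro l hl hw; exact absurd hw.1 (by omega)
  | succ n ih =>
    intro l hl hw
    obtain ⟨h3, hEc, hχc, hEcl, hχcl⟩ := hw
    set m := l.length with hm
    by_cases hch : HasChord E l
    · obtain ⟨p, q, hpq, hq, hpq1, hnpq, hEpq⟩ := hch
      by_cases hχv : χ (l.getD p 0) (l.getD q 0) = true
      · -- replace segment p..q by the chord
        set l' := l.take (p+1) ++ l.drop q with hl'
        have hab : p + 1 ≤ q := by omega
        have hbm : q ≤ m := by omega
        have ham : p + 1 ≤ m := by omega
        have hlen' : l'.length = p + 1 + (m - q) := by simp [hl']; omega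
        have hlo : ∀ j, j < p + 1 → l'.getD j 0 = l.getD j 0 := fun j hj =>
          getD_tad_lo hj ham
        have hhi : ∀ j, p + 1 ≤ j → j - (p+1) + q < m → l'.getD j 0 = l.getD (j - (p+1) + q) 0 :=
          fun j h1 h2 => getD_tad_hi h1 ham hbm h2
        have hwit : Wit E χ l' := by
          refine ⟨?_, ?_, ?_, ?_, ?_⟩
          · rw [hlen']; omega
          · intro i hi
            rw [hlen'] at hi
            rcases Nat.lt_or_ge (i+1) (p+1) with h1 | h1
            · rw [hlo i (by omega), hlo (i+1) h1]
              exact hEc i (by omega)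
            · rcases Nat.eq_or_lt_of_le h1 with h2 | h2
              · rw [hlo i (by omega), hhi (i+1) (by omega) (by omega)]
                have : i + 1 - (p+1) + q = q := by omega
                rw [this]
                have : i = p := by omega
                rw [this]
                exact hEpq
              · rw [hhi i (by omega) (by omega), hhi (i+1) (by omega) (by omega)]
                have e1 : i + 1 - (p+1) + q = (i - (p+1) + q) + 1 := by omega
                rw [e1]
                exact hEc _ (by omega)
          · intro i hi
            rw [hlen'] at hi
            rcases Nat.lt_or_ge (i+1) (p+1) with h1 | h1
            · rw [hlo i (by omega), hlo (i+1) h1]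
              exact hχc i (by omega)
            · rcases Nat.eq_or_lt_of_le h1 with h2 | h2
              · rw [hlo i (by omega), hhi (i+1) (by omega) (by omega)]
                have : i + 1 - (p+1) + q = q := by omega
                rw [this]
                have : i = p := by omega
                rw [this]
                exact hχv
              · rw [hhi i (by omega) (by omega), hhi (i+1) (by omega) (by omega)]
                have e1 : i + 1 - (p+1) + q = (i - (p+1) + q) + 1 := by omega
                rw [e1]
                exact hχc _ (by omega)
          · rw [hlen', hlo 0 (by omega), hhi (p + 1 + (m - q) - 1) (by omega) (by omega)]
            have : p + 1 + (m - q) - 1 - (p+1) + q = m - 1 := by omega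
            rw [this]
            exact hEcl
          · rw [hlen', hlo 0 (by omega), hhi (p + 1 + (m - q) - 1) (by omega) (by omega)]
            have : p + 1 + (m - q) - 1 - (p+1) + q = m - 1 := by omega
            rw [this]
            exact hχcl
        exact ih l' (by rw [hlen']; omega) hwit
      · -- the segment p..q is itself a shorter witness
        set l' := (l.drop p).take (q - p + 1) with hl'
        have hlen' : l'.length = q - p + 1 := by simp [hl']; omega
        have hg : ∀ j, j < q - p + 1 → l'.getD j 0 = l.getD (p + j) 0 := fun j hj =>
          getD_dt hj (by omega)
        have hwit : Wit E χ l' := by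
          refine ⟨?_, ?_, ?_, ?_, ?_⟩
          · rw [hlen']; omega
          · intro i hi
            rw [hlen'] at hi
            rw [hg i (by omega), hg (i+1) (by omega)]
            have : p + (i+1) = (p + i) + 1 := by omega
            rw [this]
            exact hEc _ (by omega)
          · intro i hi
            rw [hlen'] at hi
            rw [hg i (by omega), hg (i+1) (by omega)]
            have : p + (i+1) = (p + i) + 1 := by omega
            rw [this]
            exact hχc _ (by omega)
          · rw [hlen', hg 0 (by omega), hg (q - p + 1 - 1) (by omega)]
            have e1 : p + 0 = p := by omega
            have e2 : p + (q - p + 1 - 1) = q := by omega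
            rw [e1, e2]
            exact hEpq
          · rw [hlen', hg 0 (by omega), hg (q - p + 1 - 1) (by omega)]
            have e1 : p + 0 = p := by omega
            have e2 : p + (q - p + 1 - 1) = q := by omega
            rw [e1, e2]
            exact Bool.eq_false_iff.mpr (by simpa using hχv)
        exact ih l' (by rw [hlen']; omega) hwit
    · by_cases hnd : l.Nodup
      · exact ⟨l, ⟨h3, hEc, hχc, hEcl, hχcl⟩, hnd, hch⟩
      · -- duplicate vertices: shorten
        have : ∃ p q, ∃ hp : p < m, ∃ hq : q < m, p < q ∧ l[p] = l[q] := by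
          by_contra hcon
          push_neg at hcon
          apply hnd
          rw [List.Nodup, List.pairwise_iff_getElem]
          intro i j hi hj hij
          exact hcon i j hi hj hij
        obtain ⟨p, q, hp, hq, hpq, hdup⟩ := this
        have hdup' : l.getD p 0 = l.getD q 0 := by
          rw [getD_lt hp, getD_lt hq]; exact hdup
        rcases Nat.lt_or_ge (q + 1) m with hq1 | hq1
        · -- q + 1 < m
          by_cases hbad : p = 0 ∧ q = m - 2
          · -- contradiction via χ
            exfalso
            obtain ⟨hp0, hq2⟩ := hbad
            have h1 : χ (l.getD (m-2) 0) (l.getD (m-1) 0) = true := by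
              have := hχc (m-2) (by omega)
              have e : m - 2 + 1 = m - 1 := by omega
              rwa [e] at this
            rw [← hq2, ← hdup', hp0] at h1
            have e : m - 2 + 1 = m - 1 := by omega
            rw [hχcl] at h1
            exact absurd h1 (by simp)
          · set l' := l.take (p+1) ++ l.drop (q+1) with hl'
            have ham : p + 1 ≤ m := by omega
            have hbm : q + 1 ≤ m := by omega
            have hlen' : l'.length = p + 1 + (m - (q+1)) := by simp [hl']; omega
            have hlo : ∀ j, j < p + 1 → l'.getD j 0 = l.getD j 0 := fun j hj =>
              getD_tad_lo hj ham
            have hhi : ∀ j, p + 1 ≤ j → j - (p+1) + (q+1) < m → l'.getD j 0 = l.getD (j - (p+1) + (q+1)) 0 :=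
              fun j h1 h2 => getD_tad_hi h1 ham hbm h2
            have hwit : Wit E χ l' := by
              refine ⟨?_, ?_, ?_, ?_, ?_⟩
              · rw [hlen']; omega
              · intro i hi
                rw [hlen'] at hi
                rcases Nat.lt_or_ge (i+1) (p+1) with h1 | h1
                · rw [hlo i (by omega), hlo (i+1) h1]
                  exact hEc i (by omega)
                · rcases Nat.eq_or_lt_of_le h1 with h2 | h2
                  · rw [hlo i (by omega), hhi (i+1) (by omega) (by omega)]
                    have e1 : i + 1 - (p+1) + (q+1) = q + 1 := by omega
                    have e2 : i = p := by omega
                    rw [e1, e2, hdup']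
                    exact hEc q (by omega)
                  · rw [hhi i (by omega) (by omega), hhi (i+1) (by omega) (by omega)]
                    have e1 : i + 1 - (p+1) + (q+1) = (i - (p+1) + (q+1)) + 1 := by omega
                    rw [e1]
                    exact hEc _ (by omega)
              · intro i hi
                rw [hlen'] at hi
                rcases Nat.lt_or_ge (i+1) (p+1) with h1 | h1
                · rw [hlo i (by omega), hlo (i+1) h1]
                  exact hχc i (by omega)
                · rcases Nat.eq_or_lt_of_le h1 with h2 | h2
                  · rw [hlo i (by omega), hhi (i+1) (by omega) (by omega)]
                    have e1 : i + 1 - (p+1) + (q+1) = q + 1 := by omega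
                    have e2 : i = p := by omega
                    rw [e1, e2, hdup']
                    exact hχc q (by omega)
                  · rw [hhi i (by omega) (by omega), hhi (i+1) (by omega) (by omega)]
                    have e1 : i + 1 - (p+1) + (q+1) = (i - (p+1) + (q+1)) + 1 := by omega
                    rw [e1]
                    exact hχc _ (by omega)
              · rw [hlen', hlo 0 (by omega), hhi (p + 1 + (m - (q+1)) - 1) (by omega) (by omega)]
                have : p + 1 + (m - (q+1)) - 1 - (p+1) + (q+1) = m - 1 := by omega
                rw [this]
                exact hEcl
              · rw [hlen', hlo 0 (by omega), hhi (p + 1 + (m - (q+1)) - 1) (by omega) (by omega)]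
                have : p + 1 + (m - (q+1)) - 1 - (p+1) + (q+1) = m - 1 := by omega
                rw [this]
                exact hχcl
            exact ih l' (by rw [hlen']; omega) hwit
        · -- q = m - 1
          have hqe : q = m - 1 := by omega
          rcases Nat.lt_or_ge p 2 with hplt | hpge
          · exfalso
            rcases Nat.lt_or_ge p 1 with hp0 | hp1
            · have hp0' : p = 0 := by omega
              rw [hp0', hqe] at hdup'
              rw [hdup'] at hEcl
              exact hne _ _ hEcl rfl
            · have hp1' : p = 1 := by omega
              have h1 : χ (l.getD 0 0) (l.getD 1 0) = true := hχc 0 (by omega)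
              rw [hp1', hqe] at hdup'
              rw [hdup', hχcl] at h1
              simp at h1
          · set l' := l.take (p+1) with hl'
            have hlen' : l'.length = p + 1 := by simp [hl']; omega
            have hg : ∀ j, j < p + 1 → l'.getD j 0 = l.getD j 0 := by
              intro j hj
              rw [hl']
              have h1 : j < (l.take (p+1)).length := by simp; omega
              rw [getD_lt h1, List.getElem_take, getD_lt (by omega : j < m)]
            have hwit : Wit E χ l' := by
              refine ⟨?_, ?_, ?_, ?_, ?_⟩
              · rw [hlen']; omega
              · intro i hi
                rw [hlen'] at hi
                rw [hg i (by omega), hg (i+1) (by omega)]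
                exact hEc i (by omega)
              · intro i hi
                rw [hlen'] at hi
                rw [hg i (by omega), hg (i+1) (by omega)]
                exact hχc i (by omega)
              · rw [hlen', hg 0 (by omega), hg (p + 1 - 1) (by omega)]
                have e : p + 1 - 1 = p := by omega
                rw [e, hdup', hqe]
                exact hEcl
              · rw [hlen', hg 0 (by omega), hg (p + 1 - 1) (by omega)]
                have e : p + 1 - 1 = p := by omega
                rw [e, hdup', hqe]
                exact hχcl
            exact ih l' (by rw [hlen']; omega) hwit

end Main

end Stmt2Aux

theorem stmt2 (N : ℕ) (E : ℕ → ℕ → Prop) (χ : ℕ → ℕ → Bool)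
    (hEsym : Symmetric E) (hχsym : ∀ i j, χ i j = χ j i)
    (hEdom : ∀ i j, E i j → i < N ∧ j < N ∧ i ≠ j) :
    ViolatesTrans E χ ↔
      ∃ l : List ℕ, IsCycle E l ∧ l.Nodup ∧ ¬ HasChord E l ∧ numZeroEdges χ l = 1 := by
  have hne : ∀ i j, E i j → i ≠ j := fun i j h => (hEdom i j h).2.2
  constructor
  · intro hv
    obtain ⟨l, hw⟩ := (Stmt2Aux.violates_iff E χ).mp hv
    obtain ⟨l', hw', hnd, hch⟩ := Stmt2Aux.shorten hEsym hχsym hne l.length l le_rfl hw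
    obtain ⟨hcyc, hz⟩ := Stmt2Aux.wit_cycle hEsym hχsym hw'
    exact ⟨l', hcyc, hnd, hch, hz⟩
  · rintro ⟨l, hcyc, _, _, hz⟩
    exact (Stmt2Aux.violates_iff E χ).mpr (Stmt2Aux.cycle_wit hEsym hχsym hcyc hz)
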